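/- Let h : ℝ → ℝ be continuous on [0,1] and strictly concave on [0,1], with h(0) = 0, h(1) < 0, and suppose h has a right derivative at 0 (i.e., a derivative within [0,∞) at 0) that is strictly positive. Then there exists a unique y* ∈ (0,1) with h(y*) = 0, and moreover h(y) > 0 for all y ∈ (0, y*) and h(y) < 0 for all y ∈ (y*, 1]. -/

import Mathlib

/-- Sign-change lemma: a function continuous and strictly concave on `[0,1]`,
vanishing at `0`, negative at `1`, with strictly positive right derivative at
`0`, has a unique zero `y* ∈ (0,1)`; it is positive on `(0, y*)` and negative
on `(y*, 1]`. -/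
theorem strictConcave_sign_change
    (h : ℝ → ℝ)
    (hcont : ContinuousOn h (Set.Icc (0 : ℝ) 1))
    (hconc : StrictConcaveOn ℝ (Set.Icc (0 : ℝ) 1) h)
    (h0 : h 0 = 0) (h1 : h 1 < 0)
    (d : ℝ) (hd : 0 < d) (hderiv : HasDerivWithinAt h d (Set.Ici (0 : ℝ)) 0) :
    ∃ ystar ∈ Set.Ioo (0 : ℝ) 1, h ystar = 0 ∧
      (∀ y ∈ Set.Ioo (0 : ℝ) 1, h y = 0 → y = ystar) ∧
      (∀ y ∈ Set.Ioo (0 : ℝ) ystar, 0 < h y) ∧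
      (∀ y ∈ Set.Ioc ystar 1, h y < 0) := by
  -- Step 1: find x ∈ (0,1) with h x > 0, from the positive right derivative.
  have hT := hasDerivWithinAt_iff_tendsto_slope.mp hderiv
  have hset : Set.Ici (0:ℝ) \ {0} = Set.Ioi 0 := by
    ext t; constructor
    · rintro ⟨ht1, ht2⟩; exact lt_of_le_of_ne ht1 (Ne.symm ht2)
    · intro ht; exact ⟨Set.mem_Ici.mpr (le_of_lt ht), ne_of_gt ht⟩
  rw [hset] at hT
  have hE1 : ∀ᶠ t in nhdsWithin (0:ℝ) (Set.Ioi 0), 0 < slope h 0 t :=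
    hT.eventually (lt_mem_nhds hd)
  have hE2 : ∀ᶠ t in nhdsWithin (0:ℝ) (Set.Ioi 0), t < 1 :=
    Filter.Eventually.filter_mono nhdsWithin_le_nhds (eventually_lt_nhds one_pos)
  have hE3 : ∀ᶠ t in nhdsWithin (0:ℝ) (Set.Ioi 0), t ∈ Set.Ioi (0:ℝ) :=
    eventually_mem_nhdsWithin
  obtain ⟨x, hxs, hx1, hx0⟩ := (hE1.and (hE2.and hE3)).exists
  have hx0' : (0:ℝ) < x := hx0
  have hxpos : 0 < h x := by
    rw [slope_def_field] at hxs
    have := mul_pos hxs hx0'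
    rwa [h0, sub_zero, sub_zero, div_mul_cancel₀ _ (ne_of_gt hx0')] at this
  -- Step 2: IVT on [x,1]
  have hsub : Set.Icc x 1 ⊆ Set.Icc (0:ℝ) 1 := Set.Icc_subset_Icc (le_of_lt hx0') le_rfl
  have hmem : (0:ℝ) ∈ Set.Ioo (h 1) (h x) := ⟨h1, hxpos⟩
  obtain ⟨ystar, hys, hy0⟩ :=
    intermediate_value_Ioo' (le_of_lt hx1) (hcont.mono hsub) hmem
  have hys0 : 0 < ystar := lt_trans hx0' hys.1
  have hysIoo : ystar ∈ Set.Ioo (0:ℝ) 1 := ⟨hys0, hys.2⟩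
  -- positivity on (0, ystar)
  have hpos : ∀ y ∈ Set.Ioo (0:ℝ) ystar, 0 < h y := by
    rintro y ⟨hy1, hy2⟩
    have hy1' : y < 1 := lt_trans hy2 hys.2
    have hblt : y / ystar < 1 := (div_lt_one hys0).mpr hy2
    have h1a : 0 < 1 - y / ystar := by linarith
    have key := hconc.2 ⟨le_refl (0:ℝ), zero_le_one⟩
      ⟨le_of_lt hys0, le_of_lt hys.2⟩ (ne_of_lt hys0)
      h1a (div_pos hy1 hys0) (by ring)
    have harg : (1 - y / ystar) • (0:ℝ) + (y / ystar) • ystar = y := by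
      rw [smul_zero, zero_add, smul_eq_mul, div_mul_cancel₀ _ (ne_of_gt hys0)]
    rw [harg, h0, hy0] at key
    simpa using key
  -- negativity on (ystar, 1]
  have hneg : ∀ y ∈ Set.Ioc ystar 1, h y < 0 := by
    rintro y ⟨hy1, hy2⟩
    have hxy : x < y := lt_trans hys.1 hy1
    have hyx : 0 < y - x := by linarith
    set a := (y - ystar) / (y - x) with ha
    set b := (ystar - x) / (y - x) with hb
    have hapos : 0 < a := div_pos (by linarith) hyx
    have hbpos : 0 < b := div_pos (by linarith [hys.1]) hyx
    have hab : a + b = 1 := by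
      rw [ha, hb, ← add_div, div_eq_one_iff_eq (ne_of_gt hyx)]; ring
    have key := hconc.2 ⟨le_of_lt hx0', le_of_lt hx1⟩
      (⟨by linarith [hys0], hy2⟩ : y ∈ Set.Icc (0:ℝ) 1) (ne_of_lt hxy) hapos hbpos hab
    have harg : a • x + b • y = ystar := by
      simp only [smul_eq_mul, ha, hb]
      field_simp
      ring
    rw [harg, hy0] at key
    simp only [smul_eq_mul] at key
    nlinarith [mul_pos hapos hxpos]
  refine ⟨ystar, hysIoo, hy0, ?_, hpos, hneg⟩
  intro y hy hzero
  rcases lt_trichotomy y ystar with hlt | heq | hgt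
  · exact absurd hzero (ne_of_gt (hpos y ⟨hy.1, hlt⟩))
  · exact heq
  · exact absurd hzero (ne_of_lt (hneg y ⟨hgt, le_of_lt hy.2⟩))
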